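/- Let Λ be a row-finite locally convex k-graph. A function g : Λ^0 → [0,∞) is a graph trace on Λ if and only if for every v ∈ Λ^0 and every i ∈ {1,…,k} with vΛ^{e_i} ≠ ∅, one has g(v) = Σ_{λ ∈ vΛ^{e_i}} g(s(λ)). -/
import Mathlib


open scoped BigOperators NNReal ENNReal

/-- A `k`-graph: a countable small category presented on its set of morphisms,
with a range map, a source map, a (total, junk-valued on non-composable pairs)
composition, and a degree functor into `ℕ^k` satisfying the factorisation
property. -/
structure KGraph (k : ℕ) where
  M : Type
  countableM : Countable M
  nonemptyM : Nonempty M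
  src : M → M
  rng : M → M
  comp : M → M → M
  deg : M → Fin k → ℕ
  src_src : ∀ x, src (src x) = src x
  rng_src : ∀ x, rng (src x) = src x
  src_rng : ∀ x, src (rng x) = rng x
  rng_rng : ∀ x, rng (rng x) = rng x
  comp_id : ∀ x, comp x (src x) = x
  id_comp : ∀ x, comp (rng x) x = x
  src_comp : ∀ x y, src x = rng y → src (comp x y) = src y
  rng_comp : ∀ x y, src x = rng y → rng (comp x y) = rng x
  comp_assoc : ∀ x y z, src x = rng y → src y = rng z →
    comp (comp x y) z = comp x (comp y z)
  deg_src : ∀ x, deg (src x) = 0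
  deg_rng : ∀ x, deg (rng x) = 0
  deg_comp : ∀ x y, src x = rng y → deg (comp x y) = deg x + deg y
  factor : ∀ (x : M) (m n : Fin k → ℕ), deg x = m + n →
    ∃! p : M × M, src p.1 = rng p.2 ∧ comp p.1 p.2 = x ∧ deg p.1 = m ∧ deg p.2 = n

namespace KGraph

variable {k : ℕ} (Λ : KGraph k)

/-- The vertices (identity morphisms) of a `k`-graph. -/
def IsVertex (v : Λ.M) : Prop := Λ.rng v = v

/-- `Composable x y` means the composition `x ∘ y` (i.e. the path `xy`) is defined. -/
def Composable (x y : Λ.M) : Prop := Λ.src x = Λ.rng y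

/-- The type of vertices of `Λ`. -/
def Vtx := {v : Λ.M // Λ.IsVertex v}

theorem isVertex_src (x : Λ.M) : Λ.IsVertex (Λ.src x) := Λ.rng_src x

theorem isVertex_rng (x : Λ.M) : Λ.IsVertex (Λ.rng x) := Λ.rng_rng x

/-- The source of a morphism, as a vertex. -/
def srcV (x : Λ.M) : Λ.Vtx := ⟨Λ.src x, Λ.isVertex_src x⟩

/-- The set `vΛ^{≤ n}`. -/
def leSet (v : Λ.M) (n : Fin k → ℕ) : Set Λ.M :=
  {x | Λ.rng x = v ∧ Λ.deg x ≤ n ∧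
    ∀ i : Fin k, Λ.deg x + Pi.single i 1 ≤ n →
      ¬∃ y, Λ.rng y = Λ.src x ∧ Λ.deg y = Pi.single i 1}

/-- A `k`-graph is row-finite if `vΛ^n` is finite for every vertex `v` and `n ∈ ℕ^k`. -/
def RowFinite : Prop :=
  ∀ (v : Λ.M) (n : Fin k → ℕ), Λ.IsVertex v → {x | Λ.rng x = v ∧ Λ.deg x = n}.Finite

/-- A `k`-graph is locally convex if whenever `i < j`, `e ∈ Λ^{e_i}`, `f ∈ Λ^{e_j}` and
`r e = r f`, both `e` and `f` extend to paths of degree `e_i + e_j`. -/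
def LocallyConvex : Prop :=
  ∀ (i j : Fin k), i < j → ∀ e f : Λ.M,
    Λ.deg e = Pi.single i 1 → Λ.deg f = Pi.single j 1 → Λ.rng e = Λ.rng f →
    (∃ e', Λ.Composable e e' ∧ Λ.deg e' = Pi.single j 1) ∧
    (∃ f', Λ.Composable f f' ∧ Λ.deg f' = Pi.single i 1)

/-- `Λ^{min}(x,y)`: the pairs `(α, β)` with `xα = yβ` of degree `d x ⊔ d y`. -/
def MinExt (x y : Λ.M) : Set (Λ.M × Λ.M) :=
  {p | Λ.Composable x p.1 ∧ Λ.Composable y p.2 ∧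
    Λ.comp x p.1 = Λ.comp y p.2 ∧ Λ.deg (Λ.comp x p.1) = Λ.deg x ⊔ Λ.deg y}

/-- A subset `E ⊆ vΛ` is exhaustive if every `x ∈ vΛ` has a minimal common extension
with some element of `E`. -/
def Exhaustive (v : Λ.M) (E : Set Λ.M) : Prop :=
  ∀ x, Λ.rng x = v → ∃ μ ∈ E, (Λ.MinExt x μ).Nonempty

/-- A graph trace on `Λ`. -/
def IsGraphTrace (g : Λ.Vtx → ℝ≥0) : Prop :=
  ∀ (v : Λ.Vtx) (n : Fin k → ℕ), g v = ∑ᶠ x ∈ Λ.leSet v.1 n, g (Λ.srcV x)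

/-- A `𝕋`-valued `2`-cocycle on `Λ`, presented as a `ℂ`-valued function that is
unimodular on composable pairs. -/
def IsTCocycle (c : Λ.M → Λ.M → ℂ) : Prop :=
  (∀ x y, Λ.Composable x y → ‖c x y‖ = 1) ∧
  (∀ x y, Λ.IsVertex x ∨ Λ.IsVertex y → c x y = 1) ∧
  (∀ x y z, Λ.Composable x y → Λ.Composable y z →
    c x y * c (Λ.comp x y) z = c y z * c x (Λ.comp y z))

/-- A Cuntz–Krieger `(Λ, c)`-family in a `C*`-algebra `B`: relations (CK1)–(CK4). -/
def IsCKFamily {B : Type*} [NonUnitalCStarAlgebra B] [NormedSpace ℂ B]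
    (c : Λ.M → Λ.M → ℂ) (s : Λ.M → B) : Prop :=
  (∀ v, Λ.IsVertex v → star (s v) = s v ∧ s v * s v = s v) ∧
  (∀ v w, Λ.IsVertex v → Λ.IsVertex w → v ≠ w → s v * s w = 0) ∧
  (∀ x y, Λ.Composable x y → s x * s y = c x y • s (Λ.comp x y)) ∧
  (∀ x, star (s x) * s x = s (Λ.src x)) ∧
  (∀ (v : Λ.M) (n : Fin k → ℕ), Λ.IsVertex v →
    s v = ∑ᶠ x ∈ Λ.leSet v n, s x * star (s x))

end KGraph

namespace KGraph

variable {k : ℕ} {Λ : KGraph k}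

/-- The set `vΛ^{e_i}` of edges of degree `e_i` with range `v`. -/
def edgeSet (Λ : KGraph k) (v : Λ.M) (i : Fin k) : Set Λ.M :=
  {x | Λ.rng x = v ∧ Λ.deg x = Pi.single i 1}

theorem eq_rng_of_deg_eq_zero {x : Λ.M} (hx : Λ.deg x = 0) : x = Λ.rng x := by
  obtain ⟨p, hp, hu⟩ := Λ.factor x 0 0 (by simpa using hx)
  have h1 := hu (Λ.rng x, x) ⟨Λ.src_rng x, Λ.id_comp x, Λ.deg_rng x, hx⟩
  have h2 := hu (x, Λ.src x) ⟨(Λ.rng_src x).symm, Λ.comp_id x, hx, Λ.deg_src x⟩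
  exact congrArg Prod.fst (h2.trans h1.symm)

theorem src_of_vertex {v : Λ.M} (hv : Λ.IsVertex v) : Λ.src v = v := by
  conv_lhs => rw [← hv]
  rw [Λ.src_rng, hv]

theorem deg_of_vertex {v : Λ.M} (hv : Λ.IsVertex v) : Λ.deg v = 0 := by
  conv_lhs => rw [← hv, Λ.deg_rng]

theorem srcV_of_vertex (v : Λ.Vtx) : Λ.srcV v.1 = v :=
  Subtype.ext (src_of_vertex v.2)

theorem not_add_single_le_self (p : Fin k → ℕ) (j : Fin k) :
    ¬ (p + Pi.single j 1 ≤ p) := by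
  intro h
  have := h j
  simp [Pi.single_apply] at this

theorem le_single_cases {p : Fin k → ℕ} {i : Fin k} (h : p ≤ Pi.single i 1) :
    p = 0 ∨ p = Pi.single i 1 := by
  by_cases hpi : p i = 0
  · left
    funext j
    have := h j
    by_cases hji : j = i
    · subst hji; exact hpi
    · simpa [Pi.single_apply, hji] using this
  · right
    funext j
    have := h j
    by_cases hji : j = i
    · subst hji; simp only [Pi.single_eq_same] at this ⊢; omega
    · simpa [Pi.single_apply, hji] using this

/-- Factor off an edge of degree `e_j` at the range. -/
theorem factor_single {x : Λ.M} {j : Fin k} (h : 1 ≤ Λ.deg x j) :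
    ∃ f μ, Λ.src f = Λ.rng μ ∧ Λ.comp f μ = x ∧ Λ.deg f = Pi.single j 1 ∧
      Λ.deg μ = Λ.deg x - Pi.single j 1 := by
  obtain ⟨p, ⟨hp1, hp2, hp3, hp4⟩, -⟩ := Λ.factor x (Pi.single j 1) (Λ.deg x - Pi.single j 1)
    (by
      funext l
      simp only [Pi.add_apply, Pi.sub_apply, Pi.single_apply]
      by_cases hlj : l = j <;> simp [hlj] <;> omega)
  exact ⟨p.1, p.2, hp1, hp2, hp3, hp4⟩

/-- If an edge of degree `e_i` leaves `s ν`, then one leaves `r ν`. -/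
theorem exists_edge_rng {ν e : Λ.M} {i : Fin k}
    (hce : Λ.rng e = Λ.src ν) (hde : Λ.deg e = Pi.single i 1) :
    ∃ e', Λ.rng e' = Λ.rng ν ∧ Λ.deg e' = Pi.single i 1 := by
  have hcomp : Λ.src ν = Λ.rng e := hce.symm
  obtain ⟨p, ⟨hp1, hp2, hp3, hp4⟩, -⟩ := Λ.factor (Λ.comp ν e) (Pi.single i 1) (Λ.deg ν)
    (by rw [Λ.deg_comp ν e hcomp, hde, add_comm])
  refine ⟨p.1, ?_, hp3⟩
  rw [← Λ.rng_comp p.1 p.2 hp1, hp2, Λ.rng_comp ν e hcomp]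

/-- Local-convexity propagation: if `deg λ i = 0` and an `i`-edge leaves `r λ`,
then an `i`-edge leaves `s λ`. -/
theorem edge_prop (hlc : Λ.LocallyConvex) :
    ∀ (N : ℕ) (x : Λ.M) (i : Fin k), (∑ j, Λ.deg x j) = N → Λ.deg x i = 0 →
      (Λ.edgeSet (Λ.rng x) i).Nonempty → (Λ.edgeSet (Λ.src x) i).Nonempty := by
  intro N
  induction N with
  | zero =>
    intro x i hN hdi hne
    have hdeg : Λ.deg x = 0 := by
      funext j
      have : Λ.deg x j = 0 := by
        have := Finset.sum_eq_zero_iff.mp hN j (Finset.mem_univ j)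
        exact this
      exact this
    have hx : x = Λ.rng x := eq_rng_of_deg_eq_zero hdeg
    have : Λ.src x = Λ.rng x := by
      conv_lhs => rw [hx, Λ.src_rng]
    rwa [this]
  | succ N ih =>
    intro x i hN hdi hne
    have hj : ∃ j, 1 ≤ Λ.deg x j := by
      by_contra hc
      push_neg at hc
      have : ∑ j, Λ.deg x j = 0 := Finset.sum_eq_zero fun j _ => by have := hc j; omega
      omega
    obtain ⟨j, hj⟩ := hj
    have hij : j ≠ i := by rintro rfl; omega
    obtain ⟨f, μ, hc1, hc2, hdf, hdμ⟩ := factor_single hj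
    obtain ⟨e, hre, hde⟩ := hne
    have hrf : Λ.rng f = Λ.rng x := by rw [← hc2, Λ.rng_comp f μ hc1]
    -- use local convexity to get an i-edge out of s f = r μ
    have hstep : ∃ f', Λ.rng f' = Λ.rng μ ∧ Λ.deg f' = Pi.single i 1 := by
      rcases lt_or_gt_of_ne hij with hlt | hgt
      · -- j < i : apply hlc j i with e-slot f and f-slot e
        obtain ⟨⟨e', hce', hde'⟩, -⟩ := hlc j i hlt f e hdf hde (by rw [hrf, hre])
        exact ⟨e', by rw [← hce', hc1], hde'⟩
      · -- i < j : apply hlc i j with e-slot e and f-slot f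
        obtain ⟨-, ⟨f', hcf', hdf'⟩⟩ := hlc i j hgt e f hde hdf (by rw [hre, hrf])
        exact ⟨f', by rw [← hcf', hc1], hdf'⟩
    have hdx : Λ.deg x = Pi.single j 1 + Λ.deg μ := by
      rw [← hc2, Λ.deg_comp f μ hc1, hdf]
    have hμi : Λ.deg μ i = 0 := by
      have := congrFun hdx i
      simp only [Pi.add_apply, Pi.single_apply, if_neg hij] at this
      omega
    have hμN : (∑ l, Λ.deg μ l) = N := by
      have : ∑ l, Λ.deg x l = (∑ l, (Pi.single j 1 : Fin k → ℕ) l) + ∑ l, Λ.deg μ l := by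
        rw [hdx]; exact Finset.sum_add_distrib
      rw [Fintype.sum_pi_single'] at this
      omega
    have hsrc : Λ.src x = Λ.src μ := by rw [← hc2, Λ.src_comp f μ hc1]
    rw [hsrc]
    exact ih μ i hμN hμi hstep

theorem mem_leSet {v : Λ.M} {n : Fin k → ℕ} {x : Λ.M} :
    x ∈ Λ.leSet v n ↔ Λ.rng x = v ∧ Λ.deg x ≤ n ∧
      ∀ i : Fin k, Λ.deg x + Pi.single i 1 ≤ n → ¬(Λ.edgeSet (Λ.src x) i).Nonempty := by
  constructor
  · rintro ⟨h1, h2, h3⟩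
    exact ⟨h1, h2, fun i hi ⟨y, hy1, hy2⟩ => h3 i hi ⟨y, hy1, hy2⟩⟩
  · rintro ⟨h1, h2, h3⟩
    exact ⟨h1, h2, fun i hi ⟨y, hy1, hy2⟩ => h3 i hi ⟨y, hy1, hy2⟩⟩

theorem edge_mem_leSet_single {v : Λ.M} {i : Fin k} {x : Λ.M}
    (hx : x ∈ Λ.edgeSet v i) : x ∈ Λ.leSet v (Pi.single i 1) := by
  refine mem_leSet.mpr ⟨hx.1, le_of_eq hx.2, fun j hj => ?_⟩
  rw [hx.2] at hj
  exact absurd hj (not_add_single_le_self _ _)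

theorem leSet_single_eq_of_nonempty {v : Λ.M} (hv : Λ.IsVertex v) {i : Fin k}
    (hne : (Λ.edgeSet v i).Nonempty) :
    Λ.leSet v (Pi.single i 1) = Λ.edgeSet v i := by
  ext x
  constructor
  · intro hx
    obtain ⟨h1, h2, h3⟩ := mem_leSet.mp hx
    rcases le_single_cases h2 with h0 | hsingle
    · exfalso
      have hxv : x = v := by rw [eq_rng_of_deg_eq_zero h0, h1]
      have hsx : Λ.src x = v := by rw [hxv, src_of_vertex hv]
      have := h3 i (by rw [h0]; simp)
      rw [hsx] at this
      exact this hne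
    · exact ⟨h1, hsingle⟩
  · exact edge_mem_leSet_single

theorem leSet_single_eq_of_empty {v : Λ.M} (hv : Λ.IsVertex v) {i : Fin k}
    (he : ¬(Λ.edgeSet v i).Nonempty) :
    Λ.leSet v (Pi.single i 1) = {v} := by
  ext x
  constructor
  · intro hx
    obtain ⟨h1, h2, h3⟩ := mem_leSet.mp hx
    rcases le_single_cases h2 with h0 | hsingle
    · rw [Set.mem_singleton_iff, eq_rng_of_deg_eq_zero h0, h1]
    · exact absurd ⟨x, h1, hsingle⟩ he
  · rintro rfl
    refine mem_leSet.mpr ⟨hv, by rw [deg_of_vertex hv]; exact fun j => Nat.zero_le _,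
      fun j hj => ?_⟩
    have hji : j = i := by
      have := hj j
      simp only [Pi.add_apply, Pi.single_apply, deg_of_vertex hv, Pi.zero_apply,
        eq_self_iff_true, if_true, zero_add] at this
      by_contra hc
      rw [if_neg hc] at this
      omega
    subst hji
    rwa [src_of_vertex hv]

theorem leSet_zero_eq {v : Λ.M} (hv : Λ.IsVertex v) : Λ.leSet v 0 = {v} := by
  ext x
  constructor
  · intro hx
    obtain ⟨h1, h2, -⟩ := mem_leSet.mp hx
    have h0 : Λ.deg x = 0 := le_antisymm h2 (fun j => Nat.zero_le _)
    rw [Set.mem_singleton_iff, eq_rng_of_deg_eq_zero h0, h1]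
  · rintro rfl
    refine mem_leSet.mpr ⟨hv, by rw [deg_of_vertex hv], fun j hj => ?_⟩
    exfalso
    have := hj j
    simp [Pi.single_apply, deg_of_vertex hv] at this
  
theorem finite_leSet (hrf : Λ.RowFinite) {v : Λ.M} (hv : Λ.IsVertex v) (n : Fin k → ℕ) :
    (Λ.leSet v n).Finite := by
  have hsub : Λ.leSet v n ⊆ ⋃ p ∈ {p : Fin k → ℕ | ∀ i, p i ∈ Set.Iic (n i)},
      {x | Λ.rng x = v ∧ Λ.deg x = p} := by
    rintro x ⟨h1, h2, -⟩
    exact Set.mem_biUnion (fun i => h2 i) ⟨h1, rfl⟩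
  exact ((Set.Finite.pi' (fun i => Set.finite_Iic (n i))).biUnion
    fun p _ => hrf v p hv).subset hsub

theorem deg_eq_of_mem_leSet_single {v : Λ.M} (hv : Λ.IsVertex v) {i : Fin k} {x y : Λ.M}
    (hx : x ∈ Λ.leSet v (Pi.single i 1)) (hy : y ∈ Λ.leSet v (Pi.single i 1)) :
    Λ.deg x = Λ.deg y := by
  by_cases hne : (Λ.edgeSet v i).Nonempty
  · rw [leSet_single_eq_of_nonempty hv hne] at hx hy
    rw [hx.2, hy.2]
  · rw [leSet_single_eq_of_empty hv hne] at hx hy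
    rw [hx, hy]

theorem factor_unique {x μ ν μ' ν' : Λ.M}
    (h1 : Λ.src μ = Λ.rng ν) (h2 : Λ.comp μ ν = x)
    (h1' : Λ.src μ' = Λ.rng ν') (h2' : Λ.comp μ' ν' = x)
    (hd : Λ.deg μ = Λ.deg μ') : μ = μ' ∧ ν = ν' := by
  have hdx : Λ.deg x = Λ.deg μ + Λ.deg ν := by rw [← h2, Λ.deg_comp μ ν h1]
  have hdx' : Λ.deg x = Λ.deg μ' + Λ.deg ν' := by rw [← h2', Λ.deg_comp μ' ν' h1']
  have hdν : Λ.deg ν = Λ.deg ν' := by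
    funext j
    have a1 := congrFun hdx j
    have a2 := congrFun hdx' j
    have a3 := congrFun hd j
    simp only [Pi.add_apply] at a1 a2
    omega
  obtain ⟨p, hp, hu⟩ := Λ.factor x (Λ.deg μ) (Λ.deg ν) hdx
  have e := (hu (μ, ν) ⟨h1, h2, rfl, rfl⟩).trans
    (hu (μ', ν') ⟨h1', h2', hd.symm, hdν.symm⟩).symm
  exact ⟨congrArg Prod.fst e, congrArg Prod.snd e⟩

theorem comp_injOn {μ : Λ.M} (m : Fin k → ℕ) :
    Set.InjOn (Λ.comp μ) (Λ.leSet (Λ.src μ) m) := by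
  intro ν hν ν' hν' hcomp
  exact (factor_unique ((mem_leSet.mp hν).1).symm hcomp
    ((mem_leSet.mp hν').1).symm rfl rfl).2

theorem deg_split {x : Λ.M} {i : Fin k} (h : 1 ≤ Λ.deg x i) :
    Λ.deg x = Pi.single i 1 + (Λ.deg x - Pi.single i 1) := by
  funext j
  simp only [Pi.add_apply, Pi.sub_apply, Pi.single_apply]
  by_cases hji : j = i
  · subst hji; simp only [eq_self_iff_true, if_true]; omega
  · simp [hji]

/-- The key decomposition `vΛ^{≤ e_i + m} = ⊔_{μ ∈ vΛ^{≤ e_i}} μ ⋅ (s μ)Λ^{≤ m}`. -/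
theorem leSet_decomp (hlc : Λ.LocallyConvex) {v : Λ.M} (hv : Λ.IsVertex v)
    (i : Fin k) (m : Fin k → ℕ) :
    Λ.leSet v (Pi.single i 1 + m) =
      ⋃ μ ∈ Λ.leSet v (Pi.single i 1), Λ.comp μ '' Λ.leSet (Λ.src μ) m := by
  ext x
  constructor
  · intro hx
    obtain ⟨h1, h2, h3⟩ := mem_leSet.mp hx
    by_cases hdi : 1 ≤ Λ.deg x i
    · -- factor off an i-edge
      obtain ⟨f, μ, hc1, hc2, hdf, hdμ⟩ := factor_single hdi
      have hrfv : Λ.rng f = v := by rw [← hc2, Λ.rng_comp f μ hc1] at h1; exact h1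
      have hfE : f ∈ Λ.leSet v (Pi.single i 1) :=
        edge_mem_leSet_single ⟨hrfv, hdf⟩
      have hsx : Λ.src x = Λ.src μ := by rw [← hc2, Λ.src_comp f μ hc1]
      have hdx : Λ.deg x = Pi.single i 1 + Λ.deg μ := by rw [hdμ]; exact deg_split hdi
      have hμm : μ ∈ Λ.leSet (Λ.src f) m := by
        refine mem_leSet.mpr ⟨hc1.symm, ?_, ?_⟩
        · intro j
          have b1 := congrFun hdx j
          have b2 := h2 j
          simp only [Pi.add_apply, Pi.single_apply] at b1 b2 ⊢
          by_cases hji : j = i <;> simp [hji] at b1 b2 ⊢ <;> omega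
        · intro l hl
          have hle : Λ.deg x + Pi.single l 1 ≤ Pi.single i 1 + m := by
            intro j
            have b1 := congrFun hdx j
            have b2 := hl j
            simp only [Pi.add_apply] at b1 b2 ⊢
            omega
          have := h3 l hle
          rwa [hsx] at this
      exact Set.mem_biUnion hfE ⟨μ, hμm, hc2⟩
    · -- no i-edge case: μ = v
      have hdi0 : Λ.deg x i = 0 := by omega
      have hnoi : ¬(Λ.edgeSet (Λ.src x) i).Nonempty := by
        refine h3 i ?_
        intro j
        have b2 := h2 j
        simp only [Pi.add_apply, Pi.single_apply] at b2 ⊢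
        by_cases hji : j = i <;> simp [hji] at b2 ⊢ <;> omega
      have hnov : ¬(Λ.edgeSet v i).Nonempty := by
        intro hne
        rw [← h1] at hne
        exact hnoi (edge_prop hlc (∑ j, Λ.deg x j) x i rfl hdi0 hne)
      have hvA : v ∈ Λ.leSet v (Pi.single i 1) := by
        rw [leSet_single_eq_of_empty hv hnov]; rfl
      have hxm : x ∈ Λ.leSet (Λ.src v) m := by
        rw [src_of_vertex hv]
        refine mem_leSet.mpr ⟨h1, ?_, ?_⟩
        · intro j
          have b2 := h2 j
          simp only [Pi.add_apply, Pi.single_apply] at b2 ⊢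
          by_cases hji : j = i <;> simp [hji] at b2 ⊢ <;> omega
        · intro l hl
          refine h3 l ?_
          intro j
          have b2 := hl j
          simp only [Pi.add_apply, Pi.single_apply] at b2 ⊢
          by_cases hji : j = i <;> simp [hji] at b2 ⊢ <;> omega
      refine Set.mem_biUnion hvA ⟨x, hxm, ?_⟩
      have : v = Λ.rng x := h1.symm
      rw [this, Λ.id_comp x]
  · intro hx
    simp only [Set.mem_iUnion, Set.mem_image] at hx
    obtain ⟨μ, hμ, ν, hν, rfl⟩ := hx
    obtain ⟨hrμ, hdμle, hcondμ⟩ := mem_leSet.mp hμ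
    obtain ⟨hrν, hdνle, hcondν⟩ := mem_leSet.mp hν
    have hcμν : Λ.src μ = Λ.rng ν := hrν.symm
    rcases le_single_cases hdμle with h0 | hsingle
    · -- μ is the vertex v, which emits no i-edge
      have hμv : μ = v := by rw [eq_rng_of_deg_eq_zero h0, hrμ]
      have hnov : ¬(Λ.edgeSet v i).Nonempty := by
        have := hcondμ i (by rw [h0]; intro j; simp)
        rwa [hμv, src_of_vertex hv] at this
      have hrνv : Λ.rng ν = v := by rw [hrν, hμv, src_of_vertex hv]
      have hcν : Λ.comp μ ν = ν := by
        rw [hμv, ← hrνv, Λ.id_comp]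
      rw [hcν]
      refine mem_leSet.mpr ⟨hrνv, ?_, ?_⟩
      · intro j
        have b2 : Λ.deg ν j ≤ m j := hdνle j
        simp only [Pi.add_apply]
        omega
      · intro l hl
        by_cases hli : l = i
        · subst hli
          rintro ⟨e, hre, hde⟩
          obtain ⟨e', hre', hde'⟩ := exists_edge_rng hre hde
          rw [hrνv] at hre'
          exact hnov ⟨e', hre', hde'⟩
        · refine hcondν l ?_
          intro j
          have b2 := hl j
          simp only [Pi.add_apply] at b2
          have b3 : Λ.deg ν j ≤ m j := hdνle j
          simp only [Pi.add_apply]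
          rcases eq_or_ne j i with rfl | hji
          · rw [Pi.single_eq_of_ne (Ne.symm hli)]
            omega
          · rw [Pi.single_eq_of_ne hji, zero_add] at b2
            exact b2
    · -- μ is an edge of degree e_i
      have hdcomp : Λ.deg (Λ.comp μ ν) = Pi.single i 1 + Λ.deg ν := by
        rw [Λ.deg_comp μ ν hcμν, hsingle]
      refine mem_leSet.mpr ⟨by rw [Λ.rng_comp μ ν hcμν, hrμ], ?_, ?_⟩
      · intro j
        have b1 := congrFun hdcomp j
        have b2 : Λ.deg ν j ≤ m j := hdνle j
        simp only [Pi.add_apply] at b1 ⊢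
        omega
      · intro l hl
        have hsc : Λ.src (Λ.comp μ ν) = Λ.src ν := Λ.src_comp μ ν hcμν
        rw [hsc]
        refine hcondν l ?_
        intro j
        have b1 := congrFun hdcomp j
        have b2 := hl j
        simp only [Pi.add_apply] at b1 b2 ⊢
        omega

end KGraph


open KGraph in
/-- A function on the vertices of a row-finite locally convex
`k`-graph is a graph trace iff for every vertex `v` and every `i` with
`vΛ^{e_i} ≠ ∅` one has `g v = Σ_{λ ∈ vΛ^{e_i}} g (s λ)`. -/
theorem isGraphTrace_iff_edge_condition {k : ℕ} (Λ : KGraph k)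
    (hrf : Λ.RowFinite) (hlc : Λ.LocallyConvex) (g : Λ.Vtx → ℝ≥0) :
    Λ.IsGraphTrace g ↔
      ∀ (v : Λ.Vtx) (i : Fin k),
        {x | Λ.rng x = v.1 ∧ Λ.deg x = Pi.single i 1}.Nonempty →
        g v = ∑ᶠ x ∈ {x | Λ.rng x = v.1 ∧ Λ.deg x = Pi.single i 1}, g (Λ.srcV x) := by
  constructor
  · intro hg v i hne
    have := hg v (Pi.single i 1)
    rwa [leSet_single_eq_of_nonempty v.2 hne] at this
  · intro h
    have hstep : ∀ (v : Λ.Vtx) (i : Fin k),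
        g v = ∑ᶠ x ∈ Λ.leSet v.1 (Pi.single i 1), g (Λ.srcV x) := by
      intro v i
      by_cases hne : (Λ.edgeSet v.1 i).Nonempty
      · rw [leSet_single_eq_of_nonempty v.2 hne]
        exact h v i hne
      · rw [leSet_single_eq_of_empty v.2 hne, finsum_mem_singleton, srcV_of_vertex]
    have main : ∀ (N : ℕ) (n : Fin k → ℕ), (∑ j, n j) = N →
        ∀ v : Λ.Vtx, g v = ∑ᶠ x ∈ Λ.leSet v.1 n, g (Λ.srcV x) := by
      intro N
      induction N with
      | zero =>
        intro n hn v
        have hn0 : n = 0 := by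
          funext j
          exact Finset.sum_eq_zero_iff.mp hn j (Finset.mem_univ j)
        rw [hn0, leSet_zero_eq v.2, finsum_mem_singleton, srcV_of_vertex]
      | succ N ih =>
        intro n hn v
        obtain ⟨i, hi⟩ : ∃ i, 1 ≤ n i := by
          by_contra hc
          push_neg at hc
          have : ∑ j, n j = 0 := Finset.sum_eq_zero fun j _ => by have := hc j; omega
          omega
        set m : Fin k → ℕ := fun j => n j - (Pi.single i 1 : Fin k → ℕ) j with hm
        have hnm : n = Pi.single i 1 + m := by
          funext j
          simp only [hm, Pi.add_apply, Pi.single_apply]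
          by_cases hji : j = i
          · subst hji
            simp only [eq_self_iff_true, if_true]
            omega
          · simp [hji]
        have hmN : (∑ j, m j) = N := by
          have h2 : ∑ j, n j = ∑ j, ((Pi.single i 1 : Fin k → ℕ) j + m j) := by
            conv_lhs => rw [hnm]
            exact Finset.sum_congr rfl fun j _ => rfl
          rw [Finset.sum_add_distrib, Fintype.sum_pi_single'] at h2
          omega
        have hA : (Λ.leSet v.1 (Pi.single i 1)).Finite := finite_leSet hrf v.2 _
        have key : Λ.leSet v.1 n =
            ⋃ μ ∈ Λ.leSet v.1 (Pi.single i 1), Λ.comp μ '' Λ.leSet (Λ.src μ) m := by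
          rw [hnm]
          exact leSet_decomp hlc v.2 i m
        have hdisj : (Λ.leSet v.1 (Pi.single i 1)).PairwiseDisjoint
            (fun μ => Λ.comp μ '' Λ.leSet (Λ.src μ) m) := by
          intro μ hμ μ' hμ' hneq
          refine Set.disjoint_left.mpr ?_
          rintro x ⟨ν, hν, rfl⟩ ⟨ν', hν', hx⟩
          exact hneq (factor_unique ((mem_leSet.mp hν).1).symm rfl
            ((mem_leSet.mp hν').1).symm hx
            (deg_eq_of_mem_leSet_single v.2 hμ hμ')).1
        calc g v = ∑ᶠ μ ∈ Λ.leSet v.1 (Pi.single i 1), g (Λ.srcV μ) := hstep v i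
          _ = ∑ᶠ μ ∈ Λ.leSet v.1 (Pi.single i 1),
                ∑ᶠ x ∈ Λ.comp μ '' Λ.leSet (Λ.src μ) m, g (Λ.srcV x) := by
              refine finsum_mem_congr rfl fun μ hμ => ?_
              rw [finsum_mem_image (comp_injOn m)]
              calc g (Λ.srcV μ) = ∑ᶠ ν ∈ Λ.leSet (Λ.src μ) m, g (Λ.srcV ν) :=
                    ih m hmN (Λ.srcV μ)
                _ = ∑ᶠ ν ∈ Λ.leSet (Λ.src μ) m, g (Λ.srcV (Λ.comp μ ν)) := by
                    refine finsum_mem_congr rfl fun ν hν => ?_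
                    congr 1
                    exact Subtype.ext (Λ.src_comp μ ν ((mem_leSet.mp hν).1).symm).symm
          _ = ∑ᶠ x ∈ Λ.leSet v.1 n, g (Λ.srcV x) := by
              rw [key]
              exact (finsum_mem_biUnion hdisj hA fun μ hμ =>
                ((finite_leSet hrf (Λ.isVertex_src μ) m).image _)).symm
    intro v n
    exact main (∑ j, n j) n rfl v
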